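/- Let p be an odd prime not dividing 2PQD. Then D^{(p-1)/2} - Q^{(p-1)/2} ≡ U_{(p-1)/2} · V_{(p+1)/2} (mod p). -/

import Mathlib

def lucasU (P Q : ℤ) : ℕ → ℤ
  | 0 => 0
  | 1 => 1
  | n + 2 => P * lucasU P Q (n + 1) - Q * lucasU P Q n

def lucasV (P Q : ℤ) : ℕ → ℤ
  | 0 => 2
  | 1 => P
  | n + 2 => P * lucasV P Q (n + 1) - Q * lucasV P Q n

lemma lucas_aux {R : Type*} [CommRing R] (P Q : ℤ) (s : R)
    (hs : s ^ 2 = (P : R) ^ 2 - 4 * (Q : R)) : ∀ n : ℕ,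
    (2 : R) ^ n * (lucasU P Q n : R) * s = ((P : R) + s) ^ n - ((P : R) - s) ^ n ∧
    (2 : R) ^ n * (lucasV P Q n : R) = ((P : R) + s) ^ n + ((P : R) - s) ^ n := by
  have hprod : ((P : R) + s) * ((P : R) - s) = 4 * (Q : R) := by
    have h : ((P : R) + s) * ((P : R) - s) = (P : R) ^ 2 - s ^ 2 := by ring
    rw [h, hs]; ring
  intro n
  induction n using Nat.twoStepInduction with
  | zero => constructor <;> simp [lucasU, lucasV] <;> norm_num
  | one => constructor <;> simp [lucasU, lucasV] <;> ring
  | more n ih1 ih2 =>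
    obtain ⟨u1, v1⟩ := ih1
    obtain ⟨u2, v2⟩ := ih2
    constructor
    · have e : ((P : R) + s) ^ (n + 2) - ((P : R) - s) ^ (n + 2)
          = (((P : R) + s) + ((P : R) - s)) * (((P : R) + s) ^ (n + 1) - ((P : R) - s) ^ (n + 1))
            - (((P : R) + s) * ((P : R) - s)) * (((P : R) + s) ^ n - ((P : R) - s) ^ n) := by
        ring
      rw [e, ← u2, ← u1, hprod]
      show (2 : R) ^ (n + 2) * ((lucasU P Q (n + 2) : ℤ) : R) * s = _
      simp only [lucasU]
      push_cast
      ring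
    · have e : ((P : R) + s) ^ (n + 2) + ((P : R) - s) ^ (n + 2)
          = (((P : R) + s) + ((P : R) - s)) * (((P : R) + s) ^ (n + 1) + ((P : R) - s) ^ (n + 1))
            - (((P : R) + s) * ((P : R) - s)) * (((P : R) + s) ^ n + ((P : R) - s) ^ n) := by
        ring
      rw [e, ← v2, ← v1, hprod]
      show (2 : R) ^ (n + 2) * ((lucasV P Q (n + 2) : ℤ) : R) = _
      simp only [lucasV]
      push_cast
      ring

theorem lucasUV_half_mod (P Q : ℤ) (p : ℕ) (hp : p.Prime) (hodd : p ≠ 2)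
    (hdvd : ¬ (p : ℤ) ∣ 2 * P * Q * (P ^ 2 - 4 * Q)) :
    (P ^ 2 - 4 * Q) ^ ((p - 1) / 2) - Q ^ ((p - 1) / 2) ≡
      lucasU P Q ((p - 1) / 2) * lucasV P Q ((p + 1) / 2) [ZMOD p] := by
  haveI hpf : Fact p.Prime := ⟨hp⟩
  have hp2 : p % 2 = 1 := Nat.odd_iff.mp (hp.odd_of_ne_two hodd)
  have hple : 2 ≤ p := hp.two_le
  set m : ℕ := (p - 1) / 2 with hm
  have hpm : p = 2 * m + 1 := by omega
  have hp1 : (p + 1) / 2 = m + 1 := by omega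
  rw [hp1]
  -- divisibility facts
  have hDd : ¬ (p : ℤ) ∣ (P ^ 2 - 4 * Q) := fun h => hdvd (h.mul_left (2 * P * Q))
  have h2d : ¬ (p : ℤ) ∣ 2 := fun h => hdvd (((h.mul_right P).mul_right Q).mul_right _)
  set K := ZMod p
  have hDK : ((P ^ 2 - 4 * Q : ℤ) : K) ≠ 0 := by
    rwa [Ne, ZMod.intCast_zmod_eq_zero_iff_dvd]
  have h2K : (2 : K) ≠ 0 := by
    have : ((2 : ℤ) : K) ≠ 0 := by rwa [Ne, ZMod.intCast_zmod_eq_zero_iff_dvd]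
    exact_mod_cast this
  -- the quadratic extension
  set f : Polynomial K := Polynomial.X ^ 2 - Polynomial.C ((P ^ 2 - 4 * Q : ℤ) : K) with hf
  have hdeg : f.degree = 2 := by
    rw [hf]; exact Polynomial.degree_X_pow_sub_C (by norm_num) _
  have hdegne : f.degree ≠ 0 := by rw [hdeg]; decide
  have hinj : Function.Injective (AdjoinRoot.of f) :=
    AdjoinRoot.of.injective_of_degree_ne_zero hdegne
  haveI : CharP (AdjoinRoot f) p := charP_of_injective_ringHom hinj p
  set s : AdjoinRoot f := AdjoinRoot.root f with hsdef
  have hs2 : s ^ 2 = ((P ^ 2 - 4 * Q : ℤ) : AdjoinRoot f) := by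
    have h0 := AdjoinRoot.eval₂_root f
    rw [hf] at h0
    simp only [Polynomial.eval₂_sub, Polynomial.eval₂_pow, Polynomial.eval₂_X,
      Polynomial.eval₂_C, sub_eq_zero] at h0
    rw [hsdef, h0, map_intCast]
  have hs : s ^ 2 = (P : AdjoinRoot f) ^ 2 - 4 * (Q : AdjoinRoot f) := by
    rw [hs2]; push_cast; ring
  set A : AdjoinRoot f := (P : AdjoinRoot f) + s
  set B : AdjoinRoot f := (P : AdjoinRoot f) - s
  have key := lucas_aux P Q s hs
  have h1 := (key m).1
  have h2 := (key (m + 1)).2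
  -- Frobenius
  have hfrob : (A - B) ^ (2 * m + 1) = A ^ (2 * m + 1) - B ^ (2 * m + 1) := by
    rw [← hpm]; exact sub_pow_char A B
  have hAB : A - B = 2 * s := by rw [show A = (P : AdjoinRoot f) + s from rfl,
    show B = (P : AdjoinRoot f) - s from rfl]; ring
  have hABp : A * B = 4 * (Q : AdjoinRoot f) := by
    rw [show A = (P : AdjoinRoot f) + s from rfl, show B = (P : AdjoinRoot f) - s from rfl]
    have h : ((P : AdjoinRoot f) + s) * ((P : AdjoinRoot f) - s)
        = (P : AdjoinRoot f) ^ 2 - s ^ 2 := by ring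
    rw [h, hs]; ring
  have hBA : B - A = -(2 * s) := by
    rw [show A = (P : AdjoinRoot f) + s from rfl, show B = (P : AdjoinRoot f) - s from rfl]; ring
  have h4m : (4 : AdjoinRoot f) ^ m = (2 : AdjoinRoot f) ^ (2 * m) := by
    rw [show (4 : AdjoinRoot f) = 2 ^ 2 by norm_num, ← pow_mul]
  -- the key identity in AdjoinRoot f
  have E : (lucasU P Q m : AdjoinRoot f) * (lucasV P Q (m + 1) : AdjoinRoot f)
      * ((2 : AdjoinRoot f) ^ (2 * m + 1) * s)
      = (((P : AdjoinRoot f) ^ 2 - 4 * (Q : AdjoinRoot f)) ^ m - (Q : AdjoinRoot f) ^ m)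
      * ((2 : AdjoinRoot f) ^ (2 * m + 1) * s) := by
    calc (lucasU P Q m : AdjoinRoot f) * (lucasV P Q (m + 1) : AdjoinRoot f)
        * ((2 : AdjoinRoot f) ^ (2 * m + 1) * s)
        = ((2 : AdjoinRoot f) ^ m * (lucasU P Q m : AdjoinRoot f) * s)
          * ((2 : AdjoinRoot f) ^ (m + 1) * (lucasV P Q (m + 1) : AdjoinRoot f)) := by ring
      _ = (A ^ m - B ^ m) * (A ^ (m + 1) + B ^ (m + 1)) := by rw [h1, h2]
      _ = (A ^ (2 * m + 1) - B ^ (2 * m + 1)) + (A * B) ^ m * (B - A) := by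
          rw [mul_pow]; ring
      _ = (A - B) ^ (2 * m + 1) + (A * B) ^ m * (B - A) := by rw [hfrob]
      _ = (2 * s) ^ (2 * m + 1) + (4 * (Q : AdjoinRoot f)) ^ m * (-(2 * s)) := by
          rw [hAB, hABp, hBA]
      _ = (2 : AdjoinRoot f) ^ (2 * m + 1) * ((s ^ 2) ^ m * s)
          - (4 ^ m * (Q : AdjoinRoot f) ^ m) * (2 * s) := by ring
      _ = (((P : AdjoinRoot f) ^ 2 - 4 * (Q : AdjoinRoot f)) ^ m - (Q : AdjoinRoot f) ^ m)
          * ((2 : AdjoinRoot f) ^ (2 * m + 1) * s) := by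
          rw [hs, h4m]; ring
  -- the multiplier is a unit
  have h2u : IsUnit (2 : AdjoinRoot f) := by
    have : IsUnit (2 : K) := isUnit_iff_ne_zero.mpr h2K
    have h := this.map (AdjoinRoot.of f)
    rwa [map_ofNat] at h
  have hsu : IsUnit s := by
    refine IsUnit.of_mul_eq_one (a := s) (s * AdjoinRoot.of f ((P ^ 2 - 4 * Q : ℤ) : K)⁻¹) ?_
    rw [← mul_assoc, ← sq, hs2, ← map_intCast (AdjoinRoot.of f), ← map_mul,
      mul_inv_cancel₀ hDK, map_one]
  have hcu : IsUnit ((2 : AdjoinRoot f) ^ (2 * m + 1) * s) := (h2u.pow _).mul hsu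
  -- pull back to K
  have E0 : (((P ^ 2 - 4 * Q) ^ m - Q ^ m - lucasU P Q m * lucasV P Q (m + 1) : ℤ) : AdjoinRoot f)
      = 0 := by
    have h := hcu.mul_left_eq_zero.mpr (rfl : (0 : AdjoinRoot f) = 0)
    have h0 : (((P ^ 2 - 4 * Q) ^ m - Q ^ m - lucasU P Q m * lucasV P Q (m + 1) : ℤ) : AdjoinRoot f)
        * ((2 : AdjoinRoot f) ^ (2 * m + 1) * s) = 0 := by
      push_cast
      linear_combination -E
    exact (hcu.mul_left_eq_zero).mp h0
  have EK : (((P ^ 2 - 4 * Q) ^ m - Q ^ m - lucasU P Q m * lucasV P Q (m + 1) : ℤ) : K) = 0 := by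
    apply hinj
    rw [map_intCast, map_zero, E0]
  rw [← ZMod.intCast_eq_intCast_iff, ← sub_eq_zero, ← Int.cast_sub]
  exact EK
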